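/- Let q ≥ 2 and k ∈ Fin q. For every permutation σ of Fin q, the maximum over all vertices of the facet M_k = M ∪ {(k,k)} of M_q² of ((σ i : ℕ) + 1) + ((σ j : ℕ) + 1) equals 2q if (σ k : ℕ) + 1 = q, and equals 2q − 1 otherwise. (Equivalently, m_{M_k} = ∏_{σ(k)=q} x_σ^{2q} · ∏_{σ(k)≠q} x_σ^{2q−1}.) -/

import Mathlib

/-- The vertex set of the simplicial complex `M_q²`: pairs `(i,j)` with `i ≤ j` in `Fin q`. -/
abbrev MqVertex (q : ℕ) := {p : Fin q × Fin q // p.1 ≤ p.2}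

/-- The exponent of the variable `x_σ` in the lcm label `m_γ` of a finite set `γ` of vertices
of `M_q²`, where the vertex `(i,j)` is labeled by `τ_i τ_j`:
`E_γ(σ) = max_{(i,j) ∈ γ} (σ(i) + σ(j))`, with `σ(i) = (σ i : ℕ) + 1` the 1-indexed value
and the maximum of the empty set being `0`. -/
def Elabel (q : ℕ) (γ : Finset (MqVertex q)) (σ : Equiv.Perm (Fin q)) : ℕ :=
  γ.sup fun v => ((σ v.1.1 : ℕ) + 1) + ((σ v.1.2 : ℕ) + 1)

/-- For `q ≥ 2`, `k : Fin q` and any permutation `σ`, the maximum over the vertices of the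
facet `M_k = M ∪ {(k,k)}` of `M_q²` of `σ(i) + σ(j)` equals `2q` if `σ(k) = q` and `2q - 1`
otherwise; i.e. `m_{M_k} = ∏_{σ(k)=q} x_σ^{2q} ⬝ ∏_{σ(k)≠q} x_σ^{2q-1}`. -/
theorem Elabel_facet (q : ℕ) (hq : 2 ≤ q) (k : Fin q) (σ : Equiv.Perm (Fin q)) :
    Elabel q
        (insert (⟨(k, k), le_refl k⟩ : MqVertex q)
          (Finset.univ.filter fun v : MqVertex q => v.1.1 < v.1.2)) σ
      = if (σ k : ℕ) + 1 = q then 2 * q else 2 * q - 1 := by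
  classical
  have hA : Elabel q (Finset.univ.filter fun v : MqVertex q => v.1.1 < v.1.2) σ
      = 2 * q - 1 := by
    apply le_antisymm
    · apply Finset.sup_le
      intro v hv
      simp only [Finset.mem_filter, Finset.mem_univ, true_and] at hv
      have h1 : (σ v.1.1 : ℕ) < q := (σ v.1.1).isLt
      have h2 : (σ v.1.2 : ℕ) < q := (σ v.1.2).isLt
      have hne : (σ v.1.1 : ℕ) ≠ (σ v.1.2 : ℕ) := by
        intro h
        exact absurd (σ.injective (Fin.ext h)) (ne_of_lt hv)
      omega
    · set a := σ.symm ⟨q - 1, by omega⟩ with ha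
      set b := σ.symm ⟨q - 2, by omega⟩ with hb
      have hab : a ≠ b := by
        intro h
        have heq : (⟨q - 1, by omega⟩ : Fin q) = ⟨q - 2, by omega⟩ := by
          have := congrArg σ h
          simpa [ha, hb] using this
        have := congrArg Fin.val heq
        simp at this
        omega
      have hsa : (σ a : ℕ) = q - 1 := by simp [ha]
      have hsb : (σ b : ℕ) = q - 2 := by simp [hb]
      rcases lt_or_gt_of_ne hab with h | h
      · have hm : (⟨(a, b), le_of_lt h⟩ : MqVertex q)
            ∈ (Finset.univ.filter fun v : MqVertex q => v.1.1 < v.1.2) := by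
          simp [h]
        have := Finset.le_sup (f := fun v : MqVertex q =>
          ((σ v.1.1 : ℕ) + 1) + ((σ v.1.2 : ℕ) + 1)) hm
        simp only [hsa, hsb] at this
        unfold Elabel
        omega
      · have hm : (⟨(b, a), le_of_lt h⟩ : MqVertex q)
            ∈ (Finset.univ.filter fun v : MqVertex q => v.1.1 < v.1.2) := by
          simp [h]
        have := Finset.le_sup (f := fun v : MqVertex q =>
          ((σ v.1.1 : ℕ) + 1) + ((σ v.1.2 : ℕ) + 1)) hm
        simp only [hsa, hsb] at this
        unfold Elabel
        omega
  have hins : Elabel q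
      (insert (⟨(k, k), le_refl k⟩ : MqVertex q)
        (Finset.univ.filter fun v : MqVertex q => v.1.1 < v.1.2)) σ
      = (((σ k : ℕ) + 1) + ((σ k : ℕ) + 1)) ⊔
        Elabel q (Finset.univ.filter fun v : MqVertex q => v.1.1 < v.1.2) σ := by
    simp [Elabel, Finset.sup_insert]
  rw [hins, hA]
  have hk : (σ k : ℕ) < q := (σ k).isLt
  split_ifs with h <;> omega
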